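/- arXiv:1011.5930 — 4 statements merged into one kernel-verified Lean document; each statement's English description precedes it below -/
import Mathlib

section
/- The two-wire whurl relation is an involution: applying the birational map (x¹,x²,y¹,y²) ↦ (x'¹,x'²,y'¹,y'²) with y and x roles swapped (i.e., applying the relation again with (y',x') in place of (x,y)) recovers the original parameters. -/
/-- The two-wire whurl relation, viewed as the map
`R : (x¹,x²,y¹,y²) ↦ (y'¹,y'²,x'¹,x'²)`. -/
noncomputable def whurl2 (p : ℝ × ℝ × ℝ × ℝ) : ℝ × ℝ × ℝ × ℝ :=
  let x1 := p.1; let x2 := p.2.1; let y1 := p.2.2.1; let y2 := p.2.2.2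
  (x1 * (x2 + y1) / (y2 + x1),
   x2 * (x1 + y2) / (y1 + x2),
   y1 * (x1 + y2) / (y1 + x2),
   y2 * (x2 + y1) / (y2 + x1))

/-- The two-wire whurl relation is an involution on the positive orthant. -/
theorem whurl2_involution (x1 x2 y1 y2 : ℝ)
    (hx1 : 0 < x1) (hx2 : 0 < x2) (hy1 : 0 < y1) (hy2 : 0 < y2) :
    whurl2 (whurl2 (x1, x2, y1, y2)) = (x1, x2, y1, y2) := by
  have ha : (0:ℝ) < y2 + x1 := by linarith
  have hb : (0:ℝ) < y1 + x2 := by linarith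
  have ha' := ha.ne'
  have hb' := hb.ne'
  simp only [whurl2]
  have hc : y2 * (x2 + y1) / (y2 + x1) + x1 * (x2 + y1) / (y2 + x1)
      = x2 + y1 := by field_simp
  have hd : y1 * (x1 + y2) / (y1 + x2) + x2 * (x1 + y2) / (y1 + x2)
      = x1 + y2 := by field_simp
  have hc' : (0:ℝ) < x2 + y1 := by linarith
  have hd' : (0:ℝ) < x1 + y2 := by linarith
  refine Prod.ext ?_ (Prod.ext ?_ (Prod.ext ?_ ?_)) <;> simp only [hc, hd] <;>
    field_simp <;> ring
end

section
/- The infinite-capacity box-basket-ball carrier interaction factors as the composition of the basket-exchange map (d'' = d - min(d,e) + b, e'' = e - min(d,e) + b, f'' = f, with carrier basket count becoming min(d,e)) followed by the ball-exchange map (d' = d'' + f'' - min(c, d''), e' = e'', f' = min(c, d''), with carrier ball count becoming c + f'' - min(c, d'')). That is, the composite equals the map d' = d + b + f - min(e+c, d+c, d+b), e' = e + b - min(d,e), f' = min(e+c, d+c, d+b) - min(d,e), c' = c + f + min(d,e) - min(e+c, d+c, d+b). -/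
/-- The infinite-capacity box-basket-ball carrier interaction factors as the
basket-exchange map followed by the ball-exchange map. -/
theorem bbb_carrier_factorization (b c d e f : ℤ)
    (hb : 0 ≤ b) (hc : 0 ≤ c) (hd : 0 ≤ d) (he : 0 ≤ e) (hf : 0 ≤ f) :
    -- basket-exchange map
    let d'' := d - min d e + b
    let e'' := e - min d e + b
    let f'' := f
    -- ball-exchange map applied afterwards
    ((d'' + f'' - min c d'' = d + b + f - min (min (e+c) (d+c)) (d+b)) ∧
     (e'' = e + b - min d e) ∧
     (min c d'' = min (min (e+c) (d+c)) (d+b) - min d e) ∧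
     (c + f'' - min c d'' = c + f + min d e - min (min (e+c) (d+c)) (d+b))) := by
  intro d'' e'' f''; refine ⟨?_, ?_, ?_, ?_⟩ <;> omega
end

section
/- If the infinite-capacity carrier (b, c) passes through a vacuum site (d,e,f) = (1,0,0), then the output carrier has b' = 0 and c' = c - min(c, b+1), and in particular if c > 0 then c' < c; consequently, after passing through sufficiently many consecutive vacuum sites, the carrier returns to the empty state (0,0). -/
/-- The infinite-capacity carrier `(b, c)` passing through a vacuum site
`(d,e,f) = (1,0,0)`: output carrier is `(min 1 0, c + 0 + min 1 0 - min(0+c, 1+c, 1+b))`. -/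
def vacuumStep (p : ℕ × ℕ) : ℕ × ℕ :=
  (min 1 0, p.2 + 0 + min 1 0 - min (min (0 + p.2) (1 + p.2)) (1 + p.1))

lemma vacuumStep_eq (b c : ℕ) : vacuumStep (b, c) = (0, c - min c (b + 1)) := by
  simp [vacuumStep, min_assoc]
  omega

lemma vacuum_iter (k : ℕ) : ∀ m ≤ k, vacuumStep^[k] (0, m) = (0, 0) := by
  induction k with
  | zero => intro m hm; simp; omega
  | succ k ih =>
    intro m hm
    rw [Function.iterate_succ_apply, vacuumStep_eq]
    apply ih
    omega

/-- Passing the infinite-capacity carrier through a vacuum site gives `b' = 0` and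
`c' = c - min(c, b+1)`; if `c > 0` then `c' < c`; iterating through sufficiently many
vacuum sites returns the carrier to the empty state `(0,0)`. -/
theorem bbb_carrier_through_vacuum (b c : ℕ) :
    (vacuumStep (b, c)).1 = 0 ∧
    (vacuumStep (b, c)).2 = c - min c (b + 1) ∧
    (0 < c → (vacuumStep (b, c)).2 < c) ∧
    ∃ N, vacuumStep^[N] (b, c) = (0, 0) := by
  refine ⟨by rw [vacuumStep_eq], by rw [vacuumStep_eq], ?_, ?_⟩
  · intro hc; rw [vacuumStep_eq]; simp; omega
  · refine ⟨c + 1, ?_⟩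
    rw [Function.iterate_succ_apply, vacuumStep_eq]
    exact vacuum_iter c _ (by omega)
end

section
/- For the finite-capacity carrier with a + c = b + ℓ (ℓ ≥ 1) interacting with a vacuum site (1,0,0) via the tropical three-wire whurl relation, the output carrier satisfies b' = 0 and c' < c whenever c > 0; hence iterating through n vacuum sites for n large enough returns the carrier to the state (ℓ, 0, 0). -/
/-- The finite-capacity carrier `(a,b,c)` passing through a vacuum site
`(d,e,f) = (1,0,0)` via the tropical three-wire whurl relation. -/
def vacuumStepL (p : ℤ × ℤ × ℤ) : ℤ × ℤ × ℤ :=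
  let a := p.1; let b := p.2.1; let c := p.2.2
  (a - min (min (a + b) (a + c)) (b + 0) + min (min (0 + c) (1 + c)) (1 + b),
   b - min (min (a + b) (a + c)) (b + 0) + min (min (a + 0) (1 + 0)) (0 + 0),
   c - min (min (0 + c) (1 + c)) (1 + b) + min (min (a + 0) (1 + 0)) (0 + 0))

lemma vacuumStepL_eq (a b c : ℤ) :
    vacuumStepL (a, b, c) =
      (a - min (min (a + b) (a + c)) (b + 0) + min (min (0 + c) (1 + c)) (1 + b),
       b - min (min (a + b) (a + c)) (b + 0) + min (min (a + 0) (1 + 0)) (0 + 0),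
       c - min (min (0 + c) (1 + c)) (1 + b) + min (min (a + 0) (1 + 0)) (0 + 0)) := rfl

lemma vacuum_iter_s15 (n : ℕ) : ∀ a c : ℤ, 0 ≤ a → c = n →
    vacuumStepL^[n] (a, 0, c) = (a + c, 0, 0) := by
  induction n with
  | zero =>
    intro a c ha hc
    simp [hc]
  | succ n ih =>
    intro a c ha hc
    have h1 : vacuumStepL (a, 0, c) = (a + 1, 0, c - 1) := by
      rw [vacuumStepL_eq]
      refine Prod.ext ?_ (Prod.ext ?_ ?_) <;> simp <;> omega
    rw [Function.iterate_succ_apply, h1, ih (a + 1) (c - 1) (by omega) (by push_cast; omega)]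
    congr 1
    omega

/-- For a finite-capacity carrier with `a - b + c = ℓ ≥ 1`, passing through a vacuum
site gives `b' = 0` and `c' < c` whenever `c > 0`; iterating through sufficiently many
vacuum sites returns the carrier to the state `(ℓ, 0, 0)`. -/
theorem bbb_finite_carrier_through_vacuum (a b c ℓ : ℤ)
    (ha : 0 ≤ a) (hb : 0 ≤ b) (hc : 0 ≤ c) (hl : 1 ≤ ℓ) (hcap : a - b + c = ℓ) :
    (vacuumStepL (a, b, c)).2.1 = 0 ∧
    (0 < c → (vacuumStepL (a, b, c)).2.2 < c) ∧
    ∃ N, vacuumStepL^[N] (a, b, c) = (ℓ, 0, 0) := by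
  rw [vacuumStepL_eq]
  refine ⟨by simp; omega, fun h => by simp; omega, ?_⟩
  -- one step, then iterate on (a', 0, c')
  set m := min c (1 + b) with hm
  have h1 : vacuumStepL (a, b, c) = (a - b + m, 0, c - m) := by
    rw [vacuumStepL_eq]
    refine Prod.ext ?_ (Prod.ext ?_ ?_) <;> simp <;> omega
  have hcm : 0 ≤ c - m := by omega
  refine ⟨(c - m).toNat + 1, ?_⟩
  rw [Function.iterate_succ_apply, h1,
    vacuum_iter_s15 ((c - m).toNat) (a - b + m) (c - m) (by omega) (by omega)]
  congr 1
  omega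
end
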